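/- Let (X₁, Y) and (X₂, Y) be Fredholm pairs in a Banach space Z with X₁ ⊆ X₂ and ind(X₁, Y) = ind(X₂, Y), where the index of a Fredholm pair (X,Y) is dim(X ∩ Y) − dim(Z/(X+Y)). Then X₁ = X₂. -/
import Mathlib


/-- Lemma A.7: if `(X₁, Y)` and `(X₂, Y)` are Fredholm pairs in the Banach space `Z` with
`X₁ ⊆ X₂` and equal index `dim(Xᵢ ∩ Y) − dim(Z/(Xᵢ + Y))`, then `X₁ = X₂`. -/
theorem stmt_6 {𝕜 Z : Type*} [RCLike 𝕜]
    [NormedAddCommGroup Z] [NormedSpace 𝕜 Z] [CompleteSpace Z]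
    (X₁ X₂ Y : Submodule 𝕜 Z)
    (hX₁ : IsClosed (X₁ : Set Z)) (hX₂ : IsClosed (X₂ : Set Z))
    (hY : IsClosed (Y : Set Z))
    (hfin₁ : FiniteDimensional 𝕜 ↥(X₁ ⊓ Y)) (hfin₂ : FiniteDimensional 𝕜 ↥(X₂ ⊓ Y))
    (hcl₁ : IsClosed ((X₁ ⊔ Y : Submodule 𝕜 Z) : Set Z))
    (hcl₂ : IsClosed ((X₂ ⊔ Y : Submodule 𝕜 Z) : Set Z))
    (hcofin₁ : FiniteDimensional 𝕜 (Z ⧸ (X₁ ⊔ Y)))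
    (hcofin₂ : FiniteDimensional 𝕜 (Z ⧸ (X₂ ⊔ Y)))
    (hle : X₁ ≤ X₂)
    (hind : (Module.finrank 𝕜 ↥(X₁ ⊓ Y) : ℤ) - (Module.finrank 𝕜 (Z ⧸ (X₁ ⊔ Y)) : ℤ) =
            (Module.finrank 𝕜 ↥(X₂ ⊓ Y) : ℤ) - (Module.finrank 𝕜 (Z ⧸ (X₂ ⊔ Y)) : ℤ)) :
    X₁ = X₂ := by
  -- the natural surjection Z⧸(X₁⊔Y) → Z⧸(X₂⊔Y)
  have hsup_le : X₁ ⊔ Y ≤ X₂ ⊔ Y := sup_le_sup_right hle Y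
  set f : (Z ⧸ (X₁ ⊔ Y)) →ₗ[𝕜] (Z ⧸ (X₂ ⊔ Y)) :=
    Submodule.mapQ (X₁ ⊔ Y) (X₂ ⊔ Y) LinearMap.id hsup_le with hf
  have hfsurj : Function.Surjective f := by
    intro z
    obtain ⟨x, rfl⟩ := Submodule.mkQ_surjective (X₂ ⊔ Y) z
    exact ⟨Submodule.mkQ (X₁ ⊔ Y) x, rfl⟩
  -- inequalities on finranks
  have h1 : Module.finrank 𝕜 ↥(X₁ ⊓ Y) ≤ Module.finrank 𝕜 ↥(X₂ ⊓ Y) :=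
    Submodule.finrank_mono (inf_le_inf_right Y hle)
  have h2 : Module.finrank 𝕜 (Z ⧸ (X₂ ⊔ Y)) ≤ Module.finrank 𝕜 (Z ⧸ (X₁ ⊔ Y)) := by
    calc Module.finrank 𝕜 (Z ⧸ (X₂ ⊔ Y)) = Module.finrank 𝕜 ↥(LinearMap.range f) := by
          rw [LinearMap.range_eq_top.mpr hfsurj, finrank_top 𝕜 _]
      _ ≤ Module.finrank 𝕜 (Z ⧸ (X₁ ⊔ Y)) := LinearMap.finrank_range_le f
  -- from the index equality, both inequalities are equalities
  have heq1 : Module.finrank 𝕜 ↥(X₁ ⊓ Y) = Module.finrank 𝕜 ↥(X₂ ⊓ Y) := by omega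
  have heq2 : Module.finrank 𝕜 (Z ⧸ (X₁ ⊔ Y)) = Module.finrank 𝕜 (Z ⧸ (X₂ ⊔ Y)) := by omega
  -- hence X₁ ⊓ Y = X₂ ⊓ Y
  have hinf : X₁ ⊓ Y = X₂ ⊓ Y :=
    Submodule.eq_of_le_of_finrank_eq (inf_le_inf_right Y hle) heq1
  -- and f is injective, so X₂ ⊔ Y ≤ X₁ ⊔ Y, i.e. equal
  have hfinj : Function.Injective f :=
    (LinearMap.injective_iff_surjective_of_finrank_eq_finrank heq2).mpr hfsurj
  have hsup : X₁ ⊔ Y = X₂ ⊔ Y := by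
    refine le_antisymm hsup_le fun x hx => ?_
    have : f (Submodule.mkQ (X₁ ⊔ Y) x) = 0 := by
      simp [hf, Submodule.Quotient.mk_eq_zero, hx]
    have h0 : Submodule.mkQ (X₁ ⊔ Y) x = 0 := hfinj (by simpa using this)
    simpa [Submodule.Quotient.mk_eq_zero] using h0
  -- conclude by the modular law
  have : X₂ = X₂ ⊓ (X₂ ⊔ Y) := (inf_eq_left.mpr le_sup_left).symm
  rw [this, ← hsup, inf_comm, sup_inf_assoc_of_le Y hle, inf_comm Y X₂, ← hinf,
    sup_eq_left.mpr inf_le_left]
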